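/- Completeness of the propositional LTLf tableau: if a finite trace σ satisfies φ, then one can construct, by descending the complete tableau guided by σ with an index map J (J(0)=0, J incremented exactly at Step-rule nodes, constant at expansion nodes), a branch in which every node u at branch position i satisfies σ, J(i) ⊨ ψ for all ψ ∈ Γ(u), and this branch is accepted by the Empty rule after exactly |σ| poised nodes. -/

import Mathlib

/-- LTLf formulas in negated normal form over atomic propositions `α`. -/
inductive LTLf (α : Type) : Type
  | atom : α → LTLf α
  | natom : α → LTLf α
  | and : LTLf α → LTLf α → LTLf α
  | or : LTLf α → LTLf α → LTLf α
  | next : LTLf α → LTLf α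
  | wnext : LTLf α → LTLf α
  | until_ : LTLf α → LTLf α → LTLf α
  | release : LTLf α → LTLf α → LTLf α

/-- Finite-trace satisfaction: a trace is a finite list of states (valuations). -/
def Sat {α : Type} (σ : List (α → Prop)) : LTLf α → ℕ → Prop
  | .atom a, i => (σ.getD i (fun _ => False)) a
  | .natom a, i => ¬ (σ.getD i (fun _ => False)) a
  | .and φ ψ, i => Sat σ φ i ∧ Sat σ ψ i
  | .or φ ψ, i => Sat σ φ i ∨ Sat σ ψ i
  | .next φ, i => i < σ.length - 1 ∧ Sat σ φ (i + 1)
  | .wnext φ, i => i = σ.length - 1 ∨ Sat σ φ (i + 1)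
  | .until_ φ ψ, i => ∃ j, i ≤ j ∧ j < σ.length ∧ Sat σ ψ j ∧ ∀ k, i ≤ k → k < j → Sat σ φ k
  | .release φ ψ, i => (∀ j, i ≤ j → j < σ.length → Sat σ ψ j) ∨
      ∃ k, i ≤ k ∧ k < σ.length ∧ Sat σ φ k ∧ ∀ j, i ≤ j → j ≤ k → Sat σ ψ j

/-- Elementary formulas: literals, tomorrow and weak tomorrow formulas. -/
def Elementary {α : Type} : LTLf α → Prop
  | .atom _ => True
  | .natom _ => True
  | .next _ => True
  | .wnext _ => True
  | _ => False

/-- A label is poised when all its formulas are elementary. -/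
def Poised {α : Type} (Γ : Set (LTLf α)) : Prop := ∀ ψ ∈ Γ, Elementary ψ

/-- The tableau expansion rules: each rule consumes a formula and produces
the label of one of the (at most two) children. -/
inductive Expands {α : Type} (Γ : Set (LTLf α)) : Set (LTLf α) → Prop
  | orl {a b : LTLf α} : LTLf.or a b ∈ Γ → Expands Γ ((Γ \ {LTLf.or a b}) ∪ {a})
  | orr {a b : LTLf α} : LTLf.or a b ∈ Γ → Expands Γ ((Γ \ {LTLf.or a b}) ∪ {b})
  | and_ {a b : LTLf α} : LTLf.and a b ∈ Γ → Expands Γ ((Γ \ {LTLf.and a b}) ∪ {a, b})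
  | untl {a b : LTLf α} : LTLf.until_ a b ∈ Γ → Expands Γ ((Γ \ {LTLf.until_ a b}) ∪ {b})
  | untr {a b : LTLf α} : LTLf.until_ a b ∈ Γ →
      Expands Γ ((Γ \ {LTLf.until_ a b}) ∪ {a, LTLf.next (.until_ a b)})
  | rell {a b : LTLf α} : LTLf.release a b ∈ Γ → Expands Γ ((Γ \ {LTLf.release a b}) ∪ {a, b})
  | relr {a b : LTLf α} : LTLf.release a b ∈ Γ →
      Expands Γ ((Γ \ {LTLf.release a b}) ∪ {b, LTLf.wnext (.release a b)})

/-- The label produced by the Step rule from a poised label. -/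
def stepLabel {α : Type} (Γ : Set (LTLf α)) : Set (LTLf α) :=
  {ψ | LTLf.next ψ ∈ Γ ∨ LTLf.wnext ψ ∈ Γ}

/-- Successor relation between consecutive labels in a tableau branch. -/
def TabRel {α : Type} (Γ Γ' : Set (LTLf α)) : Prop :=
  Expands Γ Γ' ∨ (Poised Γ ∧ Γ' = stepLabel Γ)

/-- Propositional consistency of (the literals of) a label: the propositional analogue of
the Contradiction-rule check. -/
def Consistent {α : Type} (Γ : Set (LTLf α)) : Prop :=
  ∃ v : α → Prop, (∀ a, LTLf.atom a ∈ Γ → v a) ∧ (∀ a, LTLf.natom a ∈ Γ → ¬ v a)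

/-- A branch of the tableau for `φ`: a nonempty sequence of labels starting at `{φ}`,
consecutive labels related by an expansion rule or by the Step rule. -/
def IsBranch {α : Type} (φ : LTLf α) (br : List (Set (LTLf α))) : Prop :=
  br ≠ [] ∧ br.getD 0 ∅ = {φ} ∧
    ∀ i, i + 1 < br.length → TabRel (br.getD i ∅) (br.getD (i + 1) ∅)

/-- An accepted branch: it ends in a poised node with no tomorrow formulas (Empty rule),
and no poised node along it is rejected by the Contradiction rule. -/
def Accepted {α : Type} (φ : LTLf α) (br : List (Set (LTLf α))) : Prop :=
  IsBranch φ br ∧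
  Poised (br.getD (br.length - 1) ∅) ∧
  (∀ ψ, LTLf.next ψ ∉ br.getD (br.length - 1) ∅) ∧
  (∀ i < br.length, Poised (br.getD i ∅) → Consistent (br.getD i ∅))

section Stmt13Aux
variable {α : Type}

attribute [local instance] Classical.propDecidable

/-- weight of a formula, used as termination measure for expansion -/
def wt : LTLf α → ℕ
  | .atom _ => 1
  | .natom _ => 1
  | .next _ => 1
  | .wnext _ => 1
  | .and a b => wt a + wt b + 1
  | .or a b => wt a + wt b + 1
  | .until_ a b => wt a + wt b + 2
  | .release a b => wt a + wt b + 2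

lemma one_le_wt (ψ : LTLf α) : 1 ≤ wt ψ := by cases ψ <;> simp [wt]

noncomputable def W (Γ : Finset (LTLf α)) : ℕ := ∑ ψ ∈ Γ, wt ψ

lemma W_insert_le (a : LTLf α) (s : Finset (LTLf α)) : W (insert a s) ≤ wt a + W s := by
  by_cases h : a ∈ s
  · rw [Finset.insert_eq_self.2 h]; exact Nat.le_add_left _ _
  · rw [W, Finset.sum_insert h]; exact le_rfl

lemma W_erase {ψ : LTLf α} {Γ : Finset (LTLf α)} (h : ψ ∈ Γ) :
    W Γ = wt ψ + W (Γ.erase ψ) := (Finset.add_sum_erase _ _ h).symm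

noncomputable def pB (Δ : Finset (LTLf α)) : Bool := decide (Poised (↑Δ : Set (LTLf α)))

lemma pB_eq_true {Δ : Finset (LTLf α)} : pB Δ = true ↔ Poised (↑Δ : Set (LTLf α)) :=
  decide_eq_true_iff

def isNx : LTLf α → Bool
  | .next _ => true
  | .wnext _ => true
  | _ => false

def unnx : LTLf α → LTLf α
  | .next ψ => ψ
  | .wnext ψ => ψ
  | ψ => ψ

noncomputable def stepF (Γ : Finset (LTLf α)) : Finset (LTLf α) :=
  (Γ.filter (fun ψ => isNx ψ = true)).image unnx

lemma mem_stepF {ψ : LTLf α} {Γ : Finset (LTLf α)} :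
    ψ ∈ stepF Γ ↔ LTLf.next ψ ∈ Γ ∨ LTLf.wnext ψ ∈ Γ := by
  simp only [stepF, Finset.mem_image, Finset.mem_filter]
  constructor
  · rintro ⟨χ, ⟨hχ, hnx⟩, rfl⟩
    cases χ <;> simp [isNx] at hnx
    · exact Or.inl (by simpa [unnx] using hχ)
    · exact Or.inr (by simpa [unnx] using hχ)
  · rintro (h | h)
    · exact ⟨LTLf.next ψ, ⟨h, by simp [isNx]⟩, by simp [unnx]⟩
    · exact ⟨LTLf.wnext ψ, ⟨h, by simp [isNx]⟩, by simp [unnx]⟩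

lemma coe_stepF (Γ : Finset (LTLf α)) :
    (↑(stepF Γ) : Set (LTLf α)) = stepLabel (↑Γ : Set (LTLf α)) := by
  ext ψ
  simp [stepLabel, mem_stepF]

/-- spec of the expansion phase from label `Γ` at trace position `j` -/
def Spec (σ : List (α → Prop)) (j : ℕ) (Γ : Finset (LTLf α))
    (ch : List (Finset (LTLf α))) : Prop :=
  ch ≠ [] ∧ ch.getD 0 ∅ = Γ ∧
  (∀ i, i + 1 < ch.length →
    Expands (↑(ch.getD i ∅) : Set (LTLf α)) ↑(ch.getD (i + 1) ∅)) ∧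
  Poised (↑(ch.getD (ch.length - 1) ∅) : Set (LTLf α)) ∧
  (∀ i < ch.length, ∀ ψ ∈ ch.getD i ∅, Sat σ ψ j) ∧
  (∀ i < ch.length, ((ch.take i).countP pB) = 0) ∧
  ch.countP pB = 1

lemma spec_single (σ : List (α → Prop)) (j : ℕ) (Γ : Finset (LTLf α))
    (hp : Poised (↑Γ : Set (LTLf α))) (hsat : ∀ ψ ∈ Γ, Sat σ ψ j) :
    Spec σ j Γ [Γ] := by
  refine ⟨by simp, rfl, ?_, by simpa using hp, ?_, ?_, ?_⟩
  · intro i hi; simp at hi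
  · intro i hi
    have : i = 0 := by simpa using Nat.lt_one_iff.1 (by simpa using hi)
    subst this; simpa using hsat
  · intro i hi
    have : i = 0 := by simpa using Nat.lt_one_iff.1 (by simpa using hi)
    subst this; simp
  · simp [List.countP_cons, pB_eq_true.2 hp]

lemma spec_cons (σ : List (α → Prop)) (j : ℕ) (Γ Δ : Finset (LTLf α))
    (ch : List (Finset (LTLf α)))
    (hp : ¬ Poised (↑Γ : Set (LTLf α)))
    (hexp : Expands (↑Γ : Set (LTLf α)) ↑Δ)
    (hsatΓ : ∀ ψ ∈ Γ, Sat σ ψ j)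
    (hs : Spec σ j Δ ch) : Spec σ j Γ (Γ :: ch) := by
  obtain ⟨hne, hhd, hconsec, hlast, hsat, htake, hcount⟩ := hs
  have hchpos : 0 < ch.length := List.length_pos_iff.2 hne
  refine ⟨by simp, by simp, ?_, ?_, ?_, ?_, ?_⟩
  · intro i hi
    cases i with
    | zero =>
      rw [List.getD_cons_zero, List.getD_cons_succ, hhd]
      exact hexp
    | succ k =>
      have : k + 1 < ch.length := by simpa [List.length_cons] using hi
      simpa using hconsec k this
  · obtain ⟨m, hm⟩ : ∃ m, ch.length = m + 1 := ⟨ch.length - 1, by omega⟩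
    have : (Γ :: ch).length - 1 = m + 1 := by simp [hm]
    rw [this]
    simpa [hm] using hlast
  · intro i hi
    cases i with
    | zero => simpa using hsatΓ
    | succ k =>
      have : k < ch.length := by simpa [List.length_cons] using hi
      simpa using hsat k this
  · intro i hi
    cases i with
    | zero => simp
    | succ k =>
      have hk : k < ch.length := by simpa [List.length_cons] using hi
      have hpB : pB Γ = false := by
        rw [Bool.eq_false_iff]; intro hc; exact hp (pB_eq_true.1 hc)
      simp [List.take_succ_cons, List.countP_cons, hpB, htake k hk]
  · have hpB : pB Γ = false := by
      rw [Bool.eq_false_iff]; intro hc; exact hp (pB_eq_true.1 hc)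
    simp [List.countP_cons, hpB, hcount]

lemma step_exists (σ : List (α → Prop)) (j : ℕ) (hj : j < σ.length)
    (Γ : Finset (LTLf α)) (hsat : ∀ ψ ∈ Γ, Sat σ ψ j)
    (ψ : LTLf α) (hψ : ψ ∈ Γ) (hne : ¬ Elementary ψ) :
    ∃ Δ : Finset (LTLf α), Expands (↑Γ : Set (LTLf α)) ↑Δ ∧
      (∀ χ ∈ Δ, Sat σ χ j) ∧ W Δ < W Γ := by
  have hmem : ∀ {f : LTLf α}, f ∈ Γ → f ∈ (↑Γ : Set (LTLf α)) := fun h => by simpa using h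
  cases ψ with
  | atom a => simp [Elementary] at hne
  | natom a => simp [Elementary] at hne
  | next a => simp [Elementary] at hne
  | wnext a => simp [Elementary] at hne
  | and a b =>
    refine ⟨insert a (insert b (Γ.erase (.and a b))), ?_, ?_, ?_⟩
    · have hco : (↑(insert a (insert b (Γ.erase (LTLf.and a b)))) : Set (LTLf α))
          = ((↑Γ : Set (LTLf α)) \ {LTLf.and a b}) ∪ {a, b} := by
        ext x; simp; try tauto
      rw [hco]; exact Expands.and_ (hmem hψ)
    · intro χ hχ
      have hab := hsat _ hψ
      simp only [Sat] at hab
      rcases Finset.mem_insert.1 hχ with rfl | hχ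
      · exact hab.1
      rcases Finset.mem_insert.1 hχ with rfl | hχ
      · exact hab.2
      · exact hsat _ (Finset.mem_of_mem_erase hχ)
    · have h1 := W_insert_le a (insert b (Γ.erase (LTLf.and a b)))
      have h2 := W_insert_le b (Γ.erase (LTLf.and a b))
      have h3 := W_erase hψ
      simp only [wt] at h3
      omega
  | or a b =>
    have hab := hsat _ hψ
    simp only [Sat] at hab
    rcases hab with ha | hb
    · refine ⟨insert a (Γ.erase (.or a b)), ?_, ?_, ?_⟩
      · have hco : (↑(insert a (Γ.erase (LTLf.or a b))) : Set (LTLf α))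
            = ((↑Γ : Set (LTLf α)) \ {LTLf.or a b}) ∪ {a} := by
          ext x; simp; try tauto
        rw [hco]; exact Expands.orl (hmem hψ)
      · intro χ hχ
        rcases Finset.mem_insert.1 hχ with rfl | hχ
        · exact ha
        · exact hsat _ (Finset.mem_of_mem_erase hχ)
      · have h1 := W_insert_le a (Γ.erase (LTLf.or a b))
        have h3 := W_erase hψ
        have := one_le_wt b
        simp only [wt] at h3
        omega
    · refine ⟨insert b (Γ.erase (.or a b)), ?_, ?_, ?_⟩
      · have hco : (↑(insert b (Γ.erase (LTLf.or a b))) : Set (LTLf α))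
            = ((↑Γ : Set (LTLf α)) \ {LTLf.or a b}) ∪ {b} := by
          ext x; simp; try tauto
        rw [hco]; exact Expands.orr (hmem hψ)
      · intro χ hχ
        rcases Finset.mem_insert.1 hχ with rfl | hχ
        · exact hb
        · exact hsat _ (Finset.mem_of_mem_erase hχ)
      · have h1 := W_insert_le b (Γ.erase (LTLf.or a b))
        have h3 := W_erase hψ
        have := one_le_wt a
        simp only [wt] at h3
        omega
  | until_ a b =>
    have hU := hsat _ hψ
    simp only [Sat] at hU
    obtain ⟨j', hle, hlt, hb, ha⟩ := hU
    rcases hle.eq_or_lt with rfl | hlt'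
    · refine ⟨insert b (Γ.erase (.until_ a b)), ?_, ?_, ?_⟩
      · have hco : (↑(insert b (Γ.erase (LTLf.until_ a b))) : Set (LTLf α))
            = ((↑Γ : Set (LTLf α)) \ {LTLf.until_ a b}) ∪ {b} := by
          ext x; simp; try tauto
        rw [hco]; exact Expands.untl (hmem hψ)
      · intro χ hχ
        rcases Finset.mem_insert.1 hχ with rfl | hχ
        · exact hb
        · exact hsat _ (Finset.mem_of_mem_erase hχ)
      · have h1 := W_insert_le b (Γ.erase (LTLf.until_ a b))
        have h3 := W_erase hψ
        have := one_le_wt a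
        simp only [wt] at h3
        omega
    · refine ⟨insert a (insert (LTLf.next (.until_ a b)) (Γ.erase (.until_ a b))), ?_, ?_, ?_⟩
      · have hco : (↑(insert a (insert (LTLf.next (.until_ a b))
            (Γ.erase (LTLf.until_ a b)))) : Set (LTLf α))
            = ((↑Γ : Set (LTLf α)) \ {LTLf.until_ a b}) ∪ {a, LTLf.next (.until_ a b)} := by
          ext x; simp; try tauto
        rw [hco]; exact Expands.untr (hmem hψ)
      · intro χ hχ
        rcases Finset.mem_insert.1 hχ with rfl | hχ
        · exact ha j le_rfl hlt'
        rcases Finset.mem_insert.1 hχ with rfl | hχ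
        · simp only [Sat]
          refine ⟨by omega, j', by omega, hlt, hb, fun k h1 h2 => ha k (by omega) h2⟩
        · exact hsat _ (Finset.mem_of_mem_erase hχ)
      · have h1 := W_insert_le a (insert (LTLf.next (.until_ a b)) (Γ.erase (LTLf.until_ a b)))
        have h2 := W_insert_le (LTLf.next (.until_ a b)) (Γ.erase (LTLf.until_ a b))
        have h3 := W_erase hψ
        have := one_le_wt b
        simp only [wt] at h3 h2
        omega
  | release a b =>
    have hR := hsat _ hψ
    simp only [Sat] at hR
    have hrelr : (Sat σ b j ∧ Sat σ (LTLf.wnext (.release a b)) j) →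
        ∃ Δ : Finset (LTLf α), Expands (↑Γ : Set (LTLf α)) ↑Δ ∧
          (∀ χ ∈ Δ, Sat σ χ j) ∧ W Δ < W Γ := by
      rintro ⟨hb, hw⟩
      refine ⟨insert b (insert (LTLf.wnext (.release a b)) (Γ.erase (.release a b))), ?_, ?_, ?_⟩
      · have hco : (↑(insert b (insert (LTLf.wnext (.release a b))
            (Γ.erase (LTLf.release a b)))) : Set (LTLf α))
            = ((↑Γ : Set (LTLf α)) \ {LTLf.release a b}) ∪ {b, LTLf.wnext (.release a b)} := by
          ext x; simp; try tauto
        rw [hco]; exact Expands.relr (hmem hψ)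
      · intro χ hχ
        rcases Finset.mem_insert.1 hχ with rfl | hχ
        · exact hb
        rcases Finset.mem_insert.1 hχ with rfl | hχ
        · exact hw
        · exact hsat _ (Finset.mem_of_mem_erase hχ)
      · have h1 := W_insert_le b (insert (LTLf.wnext (.release a b)) (Γ.erase (LTLf.release a b)))
        have h2 := W_insert_le (LTLf.wnext (.release a b)) (Γ.erase (LTLf.release a b))
        have h3 := W_erase hψ
        have := one_le_wt a
        simp only [wt] at h3 h2
        omega
    rcases hR with hall | ⟨k, hjk, hk, ha, hb⟩
    · refine hrelr ⟨hall j le_rfl hj, ?_⟩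
      simp only [Sat]
      by_cases hend : j = σ.length - 1
      · exact Or.inl hend
      · exact Or.inr (Or.inl (fun j' h1 h2 => hall j' (by omega) h2))
    · rcases hjk.eq_or_lt with rfl | hlt'
      · -- k = j : use rell
        refine ⟨insert a (insert b (Γ.erase (.release a b))), ?_, ?_, ?_⟩
        · have hco : (↑(insert a (insert b (Γ.erase (LTLf.release a b)))) : Set (LTLf α))
              = ((↑Γ : Set (LTLf α)) \ {LTLf.release a b}) ∪ {a, b} := by
            ext x; simp; try tauto
          rw [hco]; exact Expands.rell (hmem hψ)
        · intro χ hχ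
          rcases Finset.mem_insert.1 hχ with rfl | hχ
          · exact ha
          rcases Finset.mem_insert.1 hχ with rfl | hχ
          · exact hb j le_rfl le_rfl
          · exact hsat _ (Finset.mem_of_mem_erase hχ)
        · have h1 := W_insert_le a (insert b (Γ.erase (LTLf.release a b)))
          have h2 := W_insert_le b (Γ.erase (LTLf.release a b))
          have h3 := W_erase hψ
          simp only [wt] at h3
          omega
      · refine hrelr ⟨hb j le_rfl (le_of_lt hlt'), ?_⟩
        simp only [Sat]
        exact Or.inr (Or.inr ⟨k, by omega, hk, ha, fun j' h1 h2 => hb j' (by omega) h2⟩)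

lemma expand (σ : List (α → Prop)) (j : ℕ) (hj : j < σ.length) :
    ∀ (n : ℕ) (Γ : Finset (LTLf α)), W Γ ≤ n → (∀ ψ ∈ Γ, Sat σ ψ j) →
      ∃ ch, Spec σ j Γ ch := by
  intro n
  induction n with
  | zero =>
    intro Γ hW hsat
    by_cases hp : Poised (↑Γ : Set (LTLf α))
    · exact ⟨[Γ], spec_single σ j Γ hp hsat⟩
    · exfalso
      have : ∃ ψ ∈ Γ, ¬ Elementary ψ := by
        by_contra hc
        push_neg at hc
        exact hp (fun ψ h => hc ψ (by simpa using h))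
      obtain ⟨ψ, hψ, _⟩ := this
      have h1 : wt ψ ≤ W Γ := Finset.single_le_sum (fun x _ => Nat.zero_le _) hψ
      have := one_le_wt ψ
      omega
  | succ m ih =>
    intro Γ hW hsat
    by_cases hp : Poised (↑Γ : Set (LTLf α))
    · exact ⟨[Γ], spec_single σ j Γ hp hsat⟩
    · have : ∃ ψ ∈ Γ, ¬ Elementary ψ := by
        by_contra hc
        push_neg at hc
        exact hp (fun ψ h => hc ψ (by simpa using h))
      obtain ⟨ψ, hψ, hne⟩ := this
      obtain ⟨Δ, hexp, hsatΔ, hWlt⟩ := step_exists σ j hj Γ hsat ψ hψ hne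
      obtain ⟨ch, hspec⟩ := ih Δ (by omega) hsatΔ
      exact ⟨Γ :: ch, spec_cons σ j Γ Δ ch hp hexp hsat hspec⟩

/-- spec of a full branch suffix starting at `Γ` (position `j`), with `d + 1`
remaining trace positions -/
def MSpec (σ : List (α → Prop)) (j d : ℕ) (Γ : Finset (LTLf α))
    (br : List (Finset (LTLf α))) : Prop :=
  br ≠ [] ∧ br.getD 0 ∅ = Γ ∧
  (∀ i, i + 1 < br.length →
    TabRel (↑(br.getD i ∅) : Set (LTLf α)) ↑(br.getD (i + 1) ∅)) ∧
  Poised (↑(br.getD (br.length - 1) ∅) : Set (LTLf α)) ∧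
  (∀ ψ, LTLf.next ψ ∉ br.getD (br.length - 1) ∅) ∧
  (∀ i < br.length, ∀ ψ ∈ br.getD i ∅, Sat σ ψ (j + (br.take i).countP pB)) ∧
  br.countP pB = d + 1

lemma main_lemma (σ : List (α → Prop)) :
    ∀ (d j : ℕ) (Γ : Finset (LTLf α)), j + d + 1 = σ.length →
      (∀ ψ ∈ Γ, Sat σ ψ j) → ∃ br, MSpec σ j d Γ br := by
  intro d
  induction d with
  | zero =>
    intro j Γ hlen hsat
    obtain ⟨ch, hne, hhd, hconsec, hlast, hsatc, htake, hcount⟩ :=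
      expand σ j (by omega) (W Γ) Γ le_rfl hsat
    have hpos : 0 < ch.length := List.length_pos_iff.2 hne
    refine ⟨ch, hne, hhd, fun i hi => Or.inl (hconsec i hi), hlast, ?_, ?_, ?_⟩
    · intro ψ hψmem
      have := hsatc (ch.length - 1) (by omega) _ hψmem
      simp only [Sat] at this
      omega
    · intro i hi ψ hψ
      rw [htake i hi]
      simpa using hsatc i hi ψ hψ
    · exact hcount
  | succ d ih =>
    intro j Γ hlen hsat
    obtain ⟨ch, hne, hhd, hconsec, hlast, hsatc, htake, hcount⟩ :=
      expand σ j (by omega) (W Γ) Γ le_rfl hsat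
    have hpos : 0 < ch.length := List.length_pos_iff.2 hne
    set Δ : Finset (LTLf α) := ch.getD (ch.length - 1) ∅ with hΔ
    have hsatΔ' : ∀ ψ ∈ stepF Δ, Sat σ ψ (j + 1) := by
      intro ψ hψ
      rcases mem_stepF.1 hψ with hn | hn
      · have := hsatc (ch.length - 1) (by omega) _ hn
        simp only [Sat] at this
        exact this.2
      · have := hsatc (ch.length - 1) (by omega) _ hn
        simp only [Sat] at this
        rcases this with h | h
        · omega
        · exact h
    obtain ⟨br', hne', hhd', hconsec', hlast', hnonext', hsat', hcount'⟩ :=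
      ih (j + 1) (stepF Δ) (by omega) hsatΔ'
    have hpos' : 0 < br'.length := List.length_pos_iff.2 hne'
    refine ⟨ch ++ br', by simp [hne], ?_, ?_, ?_, ?_, ?_, ?_⟩
    · rw [List.getD_append _ _ _ _ hpos]; exact hhd
    · -- TabRel
      intro i hi
      rcases lt_trichotomy (i + 1) ch.length with h1 | h1 | h1
      · rw [List.getD_append _ _ _ _ (by omega), List.getD_append _ _ _ _ h1]
        exact Or.inl (hconsec i h1)
      · -- step rule transition
        rw [List.getD_append _ _ _ _ (by omega),
          List.getD_append_right _ _ _ _ (by omega)]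
        have e1 : ch.getD i ∅ = Δ := by rw [hΔ]; congr 1; omega
        have e2 : i + 1 - ch.length = 0 := by omega
        rw [e1, e2, hhd']
        exact Or.inr ⟨hlast, coe_stepF Δ⟩
      · rw [List.getD_append_right _ _ _ _ (by omega),
          List.getD_append_right _ _ _ _ (by omega)]
        have e2 : i + 1 - ch.length = (i - ch.length) + 1 := by omega
        rw [e2]
        refine hconsec' (i - ch.length) ?_
        have := @List.length_append _ ch br'
        omega
    · -- last poised
      rw [List.length_append, List.getD_append_right _ _ _ _ (by omega)]
      have e : ch.length + br'.length - 1 - ch.length = br'.length - 1 := by omega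
      rw [e]; exact hlast'
    · -- last no next
      rw [List.length_append, List.getD_append_right _ _ _ _ (by omega)]
      have e : ch.length + br'.length - 1 - ch.length = br'.length - 1 := by omega
      rw [e]; exact hnonext'
    · -- satisfaction
      intro i hi ψ hψ
      rcases lt_or_ge i ch.length with h1 | h1
      · rw [List.getD_append _ _ _ _ h1] at hψ
        have e : (ch ++ br').take i = ch.take i := by
          rw [List.take_append]
          have h0 : i - ch.length = 0 := by omega
          simp [h0]
        rw [e, htake i h1]
        simpa using hsatc i h1 ψ hψ
      · rw [List.getD_append_right _ _ _ _ h1] at hψ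
        have hlt : i - ch.length < br'.length := by
          have := @List.length_append _ ch br'
          omega
        have e : (ch ++ br').take i = ch ++ br'.take (i - ch.length) := by
          rw [List.take_append, List.take_of_length_le (by omega)]
        have e2 : j + ((ch ++ br').take i).countP pB
            = (j + 1) + ((br'.take (i - ch.length)).countP pB) := by
          rw [e, List.countP_append, hcount]
          omega
        rw [e2]
        exact hsat' (i - ch.length) hlt ψ hψ
    · -- count
      rw [List.countP_append, hcount, hcount']
      omega

def fcoe (Δ : Finset (LTLf α)) : Set (LTLf α) := ↑Δ

lemma getD_map_coe (l : List (Finset (LTLf α))) (i : ℕ) :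
    (l.map fcoe).getD i ∅ = ↑(l.getD i ∅) := by
  induction l generalizing i with
  | nil => simp [fcoe]
  | cons a l ih =>
    cases i with
    | zero => simp [fcoe]
    | succ k => simpa using ih k

lemma take_succ_getD {β : Type} (l : List β) (d : β) (i : ℕ) (h : i < l.length) :
    l.take (i + 1) = l.take i ++ [l.getD i d] := by
  rw [List.take_succ]
  congr 1
  rw [List.getElem?_eq_getElem h, List.getD_eq_getElem?_getD, List.getElem?_eq_getElem h]
  simp

lemma count_lemma {β : Type} (p : β → Bool) (d : β) (l : List β) :
    ((Finset.range l.length).filter (fun i => p (l.getD i d) = true)).card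
      = l.countP p := by
  induction l using List.reverseRecOn with
  | nil => simp
  | append_singleton l a ih =>
    rw [List.countP_append, List.length_append, List.length_singleton,
      Finset.range_add_one, Finset.filter_insert]
    have hcong : (Finset.range l.length).filter
        (fun i => p ((l ++ [a]).getD i d) = true)
        = (Finset.range l.length).filter (fun i => p (l.getD i d) = true) := by
      apply Finset.filter_congr
      intro i hi
      rw [List.getD_append _ _ _ _ (Finset.mem_range.1 hi)]
    have hga : (l ++ [a]).getD l.length d = a := by
      rw [List.getD_append_right _ _ _ _ le_rfl]
      simp
    simp only [hga]
    by_cases hpa : p a = true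
    · rw [if_pos hpa, Finset.card_insert_of_notMem (by simp), hcong, ih]
      simp [List.countP_cons, hpa]
    · rw [if_neg hpa, hcong, ih]
      simp [List.countP_cons, hpa]

end Stmt13Aux

/-- completeness of the propositional LTLf tableau.  If a nonempty finite
trace `σ` satisfies `φ`, then there is a branch of the complete tableau and an index map
`J` with `J 0 = 0`, `J` incremented exactly at Step-rule (poised) nodes and constant at
expansion nodes, such that every formula in the `i`-th label is satisfied by `σ` at
position `J i`, and the branch is accepted with exactly `|σ|` poised nodes. -/
theorem stmt13 {α : Type} (φ : LTLf α) (σ : List (α → Prop)) (hσ : σ ≠ [])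
    (h : Sat σ φ 0) :
    ∃ (br : List (Set (LTLf α))) (J : ℕ → ℕ),
      Accepted φ br ∧
      J 0 = 0 ∧
      (∀ i, i + 1 < br.length →
        (Poised (br.getD i ∅) → J (i + 1) = J i + 1) ∧
        (¬ Poised (br.getD i ∅) → J (i + 1) = J i)) ∧
      (∀ i < br.length, ∀ ψ ∈ br.getD i ∅, Sat σ ψ (J i)) ∧
      {i | i < br.length ∧ Poised (br.getD i ∅)}.ncard = σ.length := by
  classical
  have hlen : 0 < σ.length := List.length_pos_iff.2 hσ
  obtain ⟨br, hne, hhd, hconsec, hlast, hnonext, hsat, hcount⟩ :=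
    main_lemma σ (σ.length - 1) 0 ({φ} : Finset (LTLf α)) (by omega)
      (by intro ψ hψ; rw [Finset.mem_singleton] at hψ; subst hψ; exact h)
  have hbrpos : 0 < br.length := List.length_pos_iff.2 hne
  refine ⟨br.map fcoe, fun i => (br.take i).countP pB,
    ⟨⟨?_, ?_, ?_⟩, ?_, ?_, ?_⟩, by simp, ?_, ?_, ?_⟩
  · simpa using hne
  · rw [getD_map_coe, hhd]; exact Finset.coe_singleton φ
  · intro i hi
    rw [getD_map_coe, getD_map_coe]
    exact hconsec i (by simpa using hi)
  · rw [List.length_map, getD_map_coe]; exact hlast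
  · intro ψ
    rw [List.length_map, getD_map_coe]
    intro hc
    exact hnonext ψ (by simpa using hc)
  · -- consistency
    intro i hi _
    rw [List.length_map] at hi
    rw [getD_map_coe]
    refine ⟨fun a => (σ.getD (0 + (br.take i).countP pB) (fun _ => False)) a, ?_, ?_⟩
    · intro a ha
      have := hsat i hi _ (by simpa using ha)
      simpa [Sat] using this
    · intro a ha
      have := hsat i hi _ (by simpa using ha)
      simpa [Sat] using this
  · -- J increments
    intro i hi
    rw [List.length_map] at hi
    have hilt : i < br.length := by omega
    have ht : br.take (i + 1) = br.take i ++ [br.getD i ∅] := take_succ_getD br ∅ i hilt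
    constructor
    · intro hp
      rw [getD_map_coe] at hp
      have hp' : pB (br[i]?.getD ∅) = true := by
        rw [← List.getD_eq_getElem?_getD]; exact pB_eq_true.2 hp
      simp [ht, List.countP_append, List.countP_cons, hp']
    · intro hp
      rw [getD_map_coe] at hp
      have hf : pB (br.getD i ∅) = false := by
        rw [Bool.eq_false_iff]; intro hc; exact hp (pB_eq_true.1 hc)
      have hf' : pB (br[i]?.getD ∅) = false := by
        rw [← List.getD_eq_getElem?_getD]; exact hf
      simp [ht, List.countP_append, List.countP_cons, hf']
  · -- satisfaction
    intro i hi ψ hψ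
    rw [List.length_map] at hi
    rw [getD_map_coe] at hψ
    have := hsat i hi ψ (by simpa using hψ)
    simpa using this
  · -- ncard
    have hiff : ∀ i, (i < (br.map fcoe).length ∧ Poised ((br.map fcoe).getD i ∅)) ↔
        (i ∈ (Finset.range br.length).filter (fun i => pB (br.getD i ∅) = true)) := by
      intro i
      rw [List.length_map, getD_map_coe, Finset.mem_filter, Finset.mem_range, pB_eq_true]
    have hsetE : {i | i < (br.map fcoe).length ∧ Poised ((br.map fcoe).getD i ∅)}
        = ↑((Finset.range br.length).filter (fun i => pB (br.getD i ∅) = true)) := by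
      ext i
      simp only [Set.mem_setOf_eq, Finset.mem_coe]
      exact hiff i
    rw [hsetE, Set.ncard_coe_finset, count_lemma pB ∅ br, hcount]
    omega
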